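/- Let 1 ≤ l < k ≤ n and let λ = (λ_1,…,λ_n) ∈ Γ_k with λ_1 ≥ λ_2 ≥ ⋯ ≥ λ_n. Then σ_l(λ) ≥ λ_1 λ_2 ⋯ λ_l. -/

import Mathlib

open Finset

/-- `esymmOn S m lam` is the m-th elementary symmetric polynomial of the
components of `lam` with indices in `S` (zero for `m < 0`, and automatically
zero for `m > |S|`). For `S = {i}ᶜ` this is `σ_m(λ|i)`, etc. -/
noncomputable def esymmOn {n : ℕ} (S : Finset (Fin n)) (m : ℤ) (lam : Fin n → ℝ) : ℝ :=
  if m < 0 then 0 else ∑ s ∈ S.powersetCard m.toNat, ∏ i ∈ s, lam i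

/-- `σ_m(λ)` for the full vector. -/
noncomputable def esymm {n : ℕ} (m : ℤ) (lam : Fin n → ℝ) : ℝ :=
  esymmOn Finset.univ m lam

/-- Garding's cone `Γ_k`. -/
def GammaCone {n : ℕ} (k : ℕ) (lam : Fin n → ℝ) : Prop :=
  ∀ j : ℕ, 1 ≤ j → j ≤ k → 0 < esymm (j : ℤ) lam

open Polynomial

namespace SigmaAux

lemma splits_derivative (p : ℝ[X]) (hp : p.Splits) :
    p.derivative.Splits := by
  by_cases hd : derivative p = 0
  · rw [hd]; exact Splits.zero
  have hpnd : p.natDegree ≠ 0 := fun h0 => hd (derivative_of_natDegree_zero h0)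
  rw [splits_iff_card_roots]
  have h1 : Multiset.card p.roots = p.natDegree := splits_iff_card_roots.mp hp
  have h2 := p.card_roots_le_derivative
  have h3 := (derivative p).card_roots'
  have h4 : (derivative p).natDegree < p.natDegree := natDegree_derivative_lt hpnd
  omega

lemma splits_iterate_derivative (p : ℝ[X]) (hp : p.Splits) (k : ℕ) :
    (derivative^[k] p).Splits := by
  induction k with
  | zero => exact hp
  | succ k ih => rw [Function.iterate_succ_apply']; exact splits_derivative _ ih

lemma splits_prod_X_add_C (s : Multiset ℝ) :
    ((s.map fun a => X + C a).prod).Splits := by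
  induction s using Multiset.induction_on with
  | empty => simpa using Splits.one
  | cons a t ih =>
      rw [Multiset.map_cons, Multiset.prod_cons]
      exact Splits.mul (Splits.of_natDegree_le_one (natDegree_X_add_C a).le) ih

lemma natDegree_prod_X_add_C_le (s : Multiset ℝ) :
    ((s.map fun a => X + C a).prod).natDegree ≤ Multiset.card s := by
  refine (natDegree_multiset_prod_le _).trans ?_
  rw [Multiset.map_map]
  calc ((s.map fun a => ((X + C a).natDegree)).sum) ≤ (s.map fun _ => 1).sum := by
        apply Multiset.sum_map_le_sum_map
        intro a _
        exact (natDegree_X_add_C a).le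
    _ = Multiset.card s := by simp

lemma deriv_coeff (s : Multiset ℝ) (k i : ℕ) (hik : i + k ≤ Multiset.card s) :
    (derivative^[k] ((s.map fun a => X + C a).prod)).coeff i
      = ((i+k).descFactorial k : ℝ) * s.esymm (Multiset.card s - (i+k)) := by
  rw [coeff_iterate_derivative, Multiset.prod_X_add_C_coeff s hik, nsmul_eq_mul]

lemma dF_pos {n k : ℕ} (h : k ≤ n) : 0 < n.descFactorial k := by
  have := Nat.descFactorial_eq_zero_iff_lt (n := n) (k := k)
  omega

lemma dF_two (b : ℕ) : ((b+2).descFactorial b) * 2 = Nat.factorial (b+2) := by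
  have h1 : (b+2).descFactorial (b+2) = Nat.factorial (b+2) := Nat.descFactorial_self _
  have h2 : (b+2).descFactorial (b+2) = (b+2).descFactorial (b+1) := by
    rw [Nat.descFactorial_succ, show b+2-(b+1) = 1 from by omega, one_mul]
  have h3 : (b+2).descFactorial (b+1) = 2 * (b+2).descFactorial b := by
    rw [Nat.descFactorial_succ, show b+2-b = 2 from by omega]
  omega

lemma dF_one (b : ℕ) : (b+1).descFactorial b = Nat.factorial (b+1) := by
  have h1 : (b+1).descFactorial (b+1) = Nat.factorial (b+1) := Nat.descFactorial_self _
  have h2 : (b+1).descFactorial (b+1) = (b+1).descFactorial b := by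
    rw [Nat.descFactorial_succ, show b+1-b = 1 from by omega, one_mul]
  omega

lemma my_esymm_zero (s : Multiset ℝ) : s.esymm 0 = 1 := by
  simp [Multiset.esymm]

/-- Newton's inequality, base (quadratic) case. -/
lemma newton_base (s : Multiset ℝ) (b : ℕ) (hm : Multiset.card s = b + 2) :
    2 * ((b:ℝ)+2) * s.esymm 2 ≤ ((b:ℝ)+1) * (s.esymm 1)^2 := by
  have hc2 : (derivative^[b] ((s.map fun a => X + C a).prod)).coeff 2
      = ((b+2).descFactorial b : ℝ) := by
    have h := deriv_coeff s b 2 (by omega)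
    rw [hm, show 2 + b = b + 2 from by omega, show b + 2 - (b+2) = 0 from by omega,
      my_esymm_zero] at h
    rw [h, mul_one]
  have hc1 : (derivative^[b] ((s.map fun a => X + C a).prod)).coeff 1
      = ((b+1).descFactorial b : ℝ) * s.esymm 1 := by
    have h := deriv_coeff s b 1 (by omega)
    rwa [hm, show 1 + b = b + 1 from by omega, show b + 2 - (b+1) = 1 from by omega] at h
  have hc0 : (derivative^[b] ((s.map fun a => X + C a).prod)).coeff 0
      = ((b).descFactorial b : ℝ) * s.esymm 2 := by
    have h := deriv_coeff s b 0 (by omega)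
    rwa [hm, show 0 + b = b from by omega, show b + 2 - b = 2 from by omega] at h
  have hc2ne : (derivative^[b] ((s.map fun a => X + C a).prod)).coeff 2 ≠ 0 := by
    rw [hc2]
    exact_mod_cast (Nat.cast_pos.mpr (dF_pos (by omega))).ne'
  have hqnd : (derivative^[b] ((s.map fun a => X + C a).prod)).natDegree = 2 := by
    have hle := (natDegree_iterate_derivative ((s.map fun a => X + C a).prod) b)
    have h2 := natDegree_prod_X_add_C_le s
    have hge := le_natDegree_of_ne_zero hc2ne
    omega
  have hqsplits := splits_iterate_derivative _ (splits_prod_X_add_C s) b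
  have hroots : Multiset.card (derivative^[b] ((s.map fun a => X + C a).prod)).roots = 2 := by
    rw [splits_iff_card_roots.mp hqsplits, hqnd]
  obtain ⟨x, hx⟩ := Multiset.card_pos_iff_exists_mem.mp
    (by omega : 0 < Multiset.card (derivative^[b] ((s.map fun a => X + C a).prod)).roots)
  have hqne : (derivative^[b] ((s.map fun a => X + C a).prod)) ≠ 0 :=
    fun h => hc2ne (by simp [h])
  have hxroot : eval x (derivative^[b] ((s.map fun a => X + C a).prod)) = 0 :=
    (mem_roots hqne).mp hx
  have heval : (derivative^[b] ((s.map fun a => X + C a).prod)).coeff 0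
      + (derivative^[b] ((s.map fun a => X + C a).prod)).coeff 1 * x
      + (derivative^[b] ((s.map fun a => X + C a).prod)).coeff 2 * x^2 = 0 := by
    rw [eval_eq_sum_range, hqnd] at hxroot
    simp [Finset.sum_range_succ] at hxroot
    linarith [hxroot]
  have hdisc : 4 * (((b+2).descFactorial b : ℝ)) * (((b).descFactorial b : ℝ) * s.esymm 2)
      ≤ (((b+1).descFactorial b : ℝ) * s.esymm 1)^2 := by
    rw [← hc0, ← hc1, ← hc2]
    nlinarith [sq_nonneg (2 * (derivative^[b] ((s.map fun a => X + C a).prod)).coeff 2 * x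
      + (derivative^[b] ((s.map fun a => X + C a).prod)).coeff 1), heval]
  have hF : (0:ℝ) < (Nat.factorial b : ℝ) := by exact_mod_cast Nat.factorial_pos b
  have hA : (2:ℝ) * ((b+2).descFactorial b : ℝ)
      = ((b:ℝ)+2)*((b:ℝ)+1)*(Nat.factorial b : ℝ) := by
    have h1 : ((b+2).descFactorial b) * 2 = (b+2) * ((b+1) * Nat.factorial b) := by
      rw [dF_two b]
      show Nat.factorial (b+2) = _
      simp [Nat.factorial_succ]
    have h2 := congrArg (Nat.cast : ℕ → ℝ) h1
    push_cast at h2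
    linarith [h2]
  have hB : ((b+1).descFactorial b : ℝ) = ((b:ℝ)+1)*(Nat.factorial b : ℝ) := by
    have h1 : (b+1).descFactorial b = (b+1) * Nat.factorial b := by
      rw [dF_one b]
      show Nat.factorial (b+1) = _
      simp [Nat.factorial_succ]
    have h2 := congrArg (Nat.cast : ℕ → ℝ) h1
    push_cast at h2
    linarith [h2]
  have hC : ((b).descFactorial b : ℝ) = (Nat.factorial b : ℝ) :=
    congrArg (Nat.cast : ℕ → ℝ) (Nat.descFactorial_self b)
  rw [hB, hC] at hdisc
  have hq1 : (0:ℝ) < ((b:ℝ)+1) * (Nat.factorial b : ℝ)^2 := by positivity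
  have key : (2*((b:ℝ)+2)* s.esymm 2) * (((b:ℝ)+1)*(Nat.factorial b : ℝ)^2)
      ≤ (((b:ℝ)+1)*(s.esymm 1)^2) * (((b:ℝ)+1)*(Nat.factorial b : ℝ)^2) := by
    calc (2*((b:ℝ)+2)*s.esymm 2) * (((b:ℝ)+1)*(Nat.factorial b : ℝ)^2)
        = 4*(((b+2).descFactorial b : ℕ):ℝ)*((Nat.factorial b : ℝ)*s.esymm 2) := by
          linear_combination (-(2 * (Nat.factorial b : ℝ) * s.esymm 2)) * hA
      _ ≤ ((((b:ℝ)+1)*(Nat.factorial b : ℝ))*s.esymm 1)^2 := by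
          calc 4*(((b+2).descFactorial b : ℕ):ℝ)*((Nat.factorial b : ℝ)*s.esymm 2)
              ≤ (((b:ℝ)+1)*(Nat.factorial b : ℝ)*s.esymm 1)^2 := hdisc
            _ = ((((b:ℝ)+1)*(Nat.factorial b : ℝ))*s.esymm 1)^2 := by ring
      _ = (((b:ℝ)+1)*(s.esymm 1)^2) * (((b:ℝ)+1)*(Nat.factorial b : ℝ)^2) := by ring
  exact le_of_mul_le_mul_right key hq1

lemma my_esymm_cons (a : ℝ) (s : Multiset ℝ) (j : ℕ) :
    (a ::ₘ s).esymm (j+1) = s.esymm (j+1) + a * s.esymm j := by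
  simp only [Multiset.esymm, Multiset.powersetCard_cons, Multiset.map_add, Multiset.sum_add,
    Multiset.map_map]
  congr 1
  rw [← Multiset.sum_map_mul_left]
  congr 1
  apply Multiset.map_congr rfl
  intro t _
  simp [Multiset.prod_cons]

lemma my_esymm_eq_zero (s : Multiset ℝ) {j : ℕ} (h : Multiset.card s < j) : s.esymm j = 0 := by
  rw [Multiset.esymm, Multiset.powersetCard_eq_empty _ h]
  simp

lemma my_esymm_card (s : Multiset ℝ) : s.esymm (Multiset.card s) = s.prod := by
  induction s using Multiset.induction_on with
  | empty => simp [my_esymm_zero]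
  | cons a t ih =>
      rw [Multiset.card_cons, my_esymm_cons, my_esymm_eq_zero t (by omega), ih]
      simp [Multiset.prod_cons]

lemma my_esymm_one (s : Multiset ℝ) : s.esymm 1 = s.sum := by
  rw [Multiset.esymm, Multiset.powersetCard_one, Multiset.map_map]
  simp [Function.comp]



lemma esymm_inv (s : Multiset ℝ) (h0 : ∀ x ∈ s, x ≠ 0) :
    ∀ i, i ≤ Multiset.card s →
      (s.map fun x => x⁻¹).esymm i * s.prod = s.esymm (Multiset.card s - i) := by
  induction s using Multiset.induction_on with
  | empty =>
      intro i hi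
      simp only [Multiset.card_zero, Nat.le_zero] at hi
      subst hi
      simp [my_esymm_zero]
  | cons a t ih =>
      intro i hi
      have ha : a ≠ 0 := h0 a (Multiset.mem_cons_self a t)
      have h0t : ∀ x ∈ t, x ≠ 0 := fun x hx => h0 x (Multiset.mem_cons_of_mem hx)
      rw [Multiset.map_cons, Multiset.prod_cons, Multiset.card_cons]
      match i with
      | 0 =>
          rw [my_esymm_zero, one_mul, Nat.sub_zero, ← Multiset.card_cons a t, my_esymm_card,
            Multiset.prod_cons]
      | (i'+1) =>
          rw [Multiset.card_cons] at hi
          rw [my_esymm_cons]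
          rcases Nat.lt_or_ge i' (Multiset.card t) with hlt | hge
          · have hIH1 := ih h0t (i'+1) (by omega)
            have hIH0 := ih h0t i' (by omega)
            calc ((t.map fun x => x⁻¹).esymm (i'+1) + a⁻¹ * (t.map fun x => x⁻¹).esymm i')
                  * (a * t.prod)
                = a * ((t.map fun x => x⁻¹).esymm (i'+1) * t.prod)
                  + (a⁻¹ * a) * ((t.map fun x => x⁻¹).esymm i' * t.prod) := by ring
              _ = a * t.esymm (Multiset.card t - (i'+1)) + 1 * t.esymm (Multiset.card t - i') := by
                  rw [hIH1, hIH0, inv_mul_cancel₀ ha]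
              _ = t.esymm ((Multiset.card t - (i'+1)) + 1)
                  + a * t.esymm (Multiset.card t - (i'+1)) := by
                  rw [show Multiset.card t - i' = (Multiset.card t - (i'+1)) + 1 from by omega]
                  ring
              _ = (a ::ₘ t).esymm (Multiset.card t + 1 - (i'+1)) := by
                  rw [show Multiset.card t + 1 - (i'+1) = (Multiset.card t - (i'+1)) + 1 from by
                    omega, my_esymm_cons]
          · have hi' : i' = Multiset.card t := by omega
            subst hi'
            have hz : (t.map fun x => x⁻¹).esymm (Multiset.card t + 1) = 0 :=
              my_esymm_eq_zero _ (by simp)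
            have hIH0 := ih h0t (Multiset.card t) le_rfl
            rw [Nat.sub_self, my_esymm_zero] at hIH0
            rw [hz, show Multiset.card t + 1 - (Multiset.card t + 1) = 0 from by omega,
              my_esymm_zero]
            calc (0 + a⁻¹ * (t.map fun x => x⁻¹).esymm (Multiset.card t)) * (a * t.prod)
                = (a⁻¹ * a) * ((t.map fun x => x⁻¹).esymm (Multiset.card t) * t.prod) := by ring
              _ = 1 := by rw [inv_mul_cancel₀ ha, hIH0, one_mul]

/-- Newton's inequality at the top: `card μ = r+2`. -/
lemma newton_top (μ : Multiset ℝ) (r : ℕ) (hc : Multiset.card μ = r + 2) :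
    μ.esymm r * μ.esymm (r+2) * (2*((r:ℝ)+2)) ≤ (μ.esymm (r+1))^2 * ((r:ℝ)+1) := by
  have htop : μ.esymm (r+2) = μ.prod := by rw [← hc]; exact my_esymm_card μ
  by_cases hz : μ.prod = 0
  · rw [htop, hz]
    have : (0:ℝ) ≤ (μ.esymm (r+1))^2 * ((r:ℝ)+1) := by positivity
    linarith
  · have h0 : ∀ x ∈ μ, x ≠ 0 := by
      intro x hx hx0
      exact hz (Multiset.prod_eq_zero (hx0 ▸ hx))
    have hcν : Multiset.card (μ.map fun x => x⁻¹) = r + 2 := by rw [Multiset.card_map, hc]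
    have base := newton_base (μ.map fun x => x⁻¹) r hcν
    have hid2 : (μ.map fun x => x⁻¹).esymm 2 * μ.prod = μ.esymm r := by
      have h := esymm_inv μ h0 2 (by omega)
      rwa [hc, show r + 2 - 2 = r from by omega] at h
    have hid1 : (μ.map fun x => x⁻¹).esymm 1 * μ.prod = μ.esymm (r+1) := by
      have h := esymm_inv μ h0 1 (by omega)
      rwa [hc, show r + 2 - 1 = r + 1 from by omega] at h
    calc μ.esymm r * μ.esymm (r+2) * (2*((r:ℝ)+2))
        = (2*((r:ℝ)+2) * (μ.map fun x => x⁻¹).esymm 2) * μ.prod^2 := by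
          rw [← hid2, htop]; ring
      _ ≤ (((r:ℝ)+1) * ((μ.map fun x => x⁻¹).esymm 1)^2) * μ.prod^2 := by
          apply mul_le_mul_of_nonneg_right _ (sq_nonneg _)
          linarith [base]
      _ = (μ.esymm (r+1))^2 * ((r:ℝ)+1) := by rw [← hid1]; ring

lemma const_ineq (r D : ℕ) :
    (r+1) * ((D+1).descFactorial D)^2
      ≤ (2*(r+2)) * (((D+2).descFactorial D) * (D.descFactorial D)) := by
  rw [dF_one, Nat.descFactorial_self]
  have h2 : 2 * ((D+2).descFactorial D) = Nat.factorial (D+2) := by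
    rw [mul_comm]; exact dF_two D
  have hf2 : Nat.factorial (D+2) = (D+2) * Nat.factorial (D+1) := rfl
  have hf1 : Nat.factorial (D+1) = (D+1) * Nat.factorial D := rfl
  have e1 : (r+1) * (Nat.factorial (D+1))^2
      = ((r+1)*(D+1)) * (Nat.factorial (D+1) * Nat.factorial D) := by
    rw [hf1]; ring
  have e2 : (2*(r+2)) * (((D+2).descFactorial D) * Nat.factorial D)
      = ((r+2)*(D+2)) * (Nat.factorial (D+1) * Nat.factorial D) := by
    calc (2*(r+2)) * (((D+2).descFactorial D) * Nat.factorial D)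
        = (r+2) * ((2 * ((D+2).descFactorial D)) * Nat.factorial D) := by ring
      _ = (r+2) * (Nat.factorial (D+2) * Nat.factorial D) := by rw [h2]
      _ = ((r+2)*(D+2)) * (Nat.factorial (D+1) * Nat.factorial D) := by rw [hf2]; ring
  rw [e1, e2]
  exact Nat.mul_le_mul (Nat.mul_le_mul (by omega) (by omega)) le_rfl

/-- Newton's inequality (normalized form, arbitrary reals). -/
lemma newton (s : Multiset ℝ) (r : ℕ) :
    s.esymm r * s.esymm (r+2) ≤ (s.esymm (r+1))^2 := by
  rcases Nat.lt_or_ge (Multiset.card s) (r+2) with hlt | hge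
  · rw [my_esymm_eq_zero s hlt, mul_zero]
    exact sq_nonneg _
  obtain ⟨D, hD⟩ : ∃ D, Multiset.card s = r + 2 + D := ⟨Multiset.card s - (r+2), by omega⟩
  have key : ∀ i : ℕ, i ≤ r + 2 →
      (derivative^[D] ((s.map fun a => X + C a).prod)).coeff (r+2-i)
        = (((Multiset.card s - i).descFactorial D : ℕ) : ℝ) * s.esymm i := by
    intro i hi
    have h := deriv_coeff s D (r+2-i) (by omega)
    rw [h, show (r+2-i)+D = Multiset.card s - i from by omega,
      show Multiset.card s - (Multiset.card s - i) = i from by omega]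
  have hLpos : (0:ℝ) < ((Multiset.card s).descFactorial D : ℝ) := by
    exact_mod_cast dF_pos (by omega)
  have hctop : (derivative^[D] ((s.map fun a => X + C a).prod)).coeff (r+2)
      = (((Multiset.card s).descFactorial D : ℕ) : ℝ) := by
    have h := key 0 (by omega)
    rwa [Nat.sub_zero, my_esymm_zero, mul_one] at h
  have hc2ne : (derivative^[D] ((s.map fun a => X + C a).prod)).coeff (r+2) ≠ 0 := by
    rw [hctop]; exact hLpos.ne'
  have hqnd : (derivative^[D] ((s.map fun a => X + C a).prod)).natDegree = r+2 := by
    have hle := natDegree_iterate_derivative ((s.map fun a => X + C a).prod) D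
    have h2 := natDegree_prod_X_add_C_le s
    have hge2 := le_natDegree_of_ne_zero hc2ne
    omega
  have hqsplits := splits_iterate_derivative _ (splits_prod_X_add_C s) D
  have hroots : Multiset.card (derivative^[D] ((s.map fun a => X + C a).prod)).roots = r+2 := by
    rw [splits_iff_card_roots.mp hqsplits, hqnd]
  set t := (derivative^[D] ((s.map fun a => X + C a).prod)).roots with ht
  have hvieta : ∀ i : ℕ, i ≤ r+2 →
      (((Multiset.card s).descFactorial D : ℕ) : ℝ) * ((t.map Neg.neg).esymm i)
        = (((Multiset.card s - i).descFactorial D : ℕ) : ℝ) * s.esymm i := by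
    intro i hi
    have hv := coeff_eq_esymm_roots_of_splits hqsplits
      (show r+2-i ≤ (derivative^[D] ((s.map fun a => X + C a).prod)).natDegree by omega)
    rw [hqnd, show r+2-(r+2-i) = i from by omega] at hv
    have hlc : (derivative^[D] ((s.map fun a => X + C a).prod)).leadingCoeff
        = (((Multiset.card s).descFactorial D : ℕ) : ℝ) := by
      rw [Polynomial.leadingCoeff, hqnd, hctop]
    rw [hlc] at hv
    rw [Multiset.esymm_neg]
    calc (((Multiset.card s).descFactorial D : ℕ) : ℝ) * ((-1)^i * t.esymm i)
        = (((Multiset.card s).descFactorial D : ℕ) : ℝ) * (-1)^i * t.esymm i := by ring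
      _ = (derivative^[D] ((s.map fun a => X + C a).prod)).coeff (r+2-i) := hv.symm
      _ = (((Multiset.card s - i).descFactorial D : ℕ) : ℝ) * s.esymm i := key i hi
  have hcμ : Multiset.card (t.map Neg.neg) = r + 2 := by rw [Multiset.card_map, hroots]
  have top := newton_top (t.map Neg.neg) r hcμ
  -- abbreviations
  set L := (((Multiset.card s).descFactorial D : ℕ) : ℝ) with hL
  set dr := (((Multiset.card s - r).descFactorial D : ℕ) : ℝ) with hdr
  set dr1 := (((Multiset.card s - (r+1)).descFactorial D : ℕ) : ℝ) with hdr1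
  set dr2 := (((Multiset.card s - (r+2)).descFactorial D : ℕ) : ℝ) with hdr2
  have hIr := hvieta r (by omega)
  have hIr1 := hvieta (r+1) (by omega)
  have hIr2 := hvieta (r+2) (by omega)
  have K : (dr * s.esymm r) * (dr2 * s.esymm (r+2)) * (2*((r:ℝ)+2))
      ≤ (dr1 * s.esymm (r+1))^2 * ((r:ℝ)+1) := by
    calc (dr * s.esymm r) * (dr2 * s.esymm (r+2)) * (2*((r:ℝ)+2))
        = ((t.map Neg.neg).esymm r * (t.map Neg.neg).esymm (r+2) * (2*((r:ℝ)+2))) * L^2 := by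
          rw [← hIr, ← hIr2]; ring
      _ ≤ (((t.map Neg.neg).esymm (r+1))^2 * ((r:ℝ)+1)) * L^2 :=
          mul_le_mul_of_nonneg_right top (sq_nonneg _)
      _ = (dr1 * s.esymm (r+1))^2 * ((r:ℝ)+1) := by rw [← hIr1]; ring
  -- constants
  have hsubr : Multiset.card s - r = D + 2 := by omega
  have hsubr1 : Multiset.card s - (r+1) = D + 1 := by omega
  have hsubr2 : Multiset.card s - (r+2) = D := by omega
  have hconst : dr1^2 * ((r:ℝ)+1) ≤ (2*((r:ℝ)+2)) * (dr * dr2) := by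
    rw [hdr, hdr1, hdr2, hsubr, hsubr1, hsubr2]
    have h := const_ineq r D
    calc (((((D+1).descFactorial D : ℕ)) : ℝ))^2 * ((r:ℝ)+1)
        = (((r+1) * ((D+1).descFactorial D)^2 : ℕ) : ℝ) := by push_cast; ring
      _ ≤ (((2*(r+2)) * (((D+2).descFactorial D) * (D.descFactorial D)) : ℕ) : ℝ) := by
          exact_mod_cast h
      _ = (2*((r:ℝ)+2)) * ((((D+2).descFactorial D : ℕ) : ℝ) * ((D.descFactorial D : ℕ) : ℝ)) := by
          push_cast; ring
  have hCpos : (0:ℝ) < (2*((r:ℝ)+2)) * (dr * dr2) := by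
    rw [hdr, hdr2, hsubr, hsubr2]
    have p1 : (0:ℝ) < (((D+2).descFactorial D : ℕ) : ℝ) := by exact_mod_cast dF_pos (by omega)
    have p2 : (0:ℝ) < ((D.descFactorial D : ℕ) : ℝ) := by exact_mod_cast dF_pos (by omega)
    positivity
  -- conclude
  have final : (s.esymm r * s.esymm (r+2)) * ((2*((r:ℝ)+2)) * (dr * dr2))
      ≤ ((s.esymm (r+1))^2) * ((2*((r:ℝ)+2)) * (dr * dr2)) := by
    calc (s.esymm r * s.esymm (r+2)) * ((2*((r:ℝ)+2)) * (dr * dr2))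
        = (dr * s.esymm r) * (dr2 * s.esymm (r+2)) * (2*((r:ℝ)+2)) := by ring
      _ ≤ (dr1 * s.esymm (r+1))^2 * ((r:ℝ)+1) := K
      _ = ((s.esymm (r+1))^2) * (dr1^2 * ((r:ℝ)+1)) := by ring
      _ ≤ ((s.esymm (r+1))^2) * ((2*((r:ℝ)+2)) * (dr * dr2)) :=
          mul_le_mul_of_nonneg_left hconst (sq_nonneg _)
  exact le_of_mul_le_mul_right final hCpos

/-! ### The Garding cone part -/

variable {n : ℕ}

/-- esymm of the values of `lam` on a finite index set. -/
noncomputable def E (lam : Fin n → ℝ) (S : Finset (Fin n)) (j : ℕ) : ℝ :=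
  (S.val.map lam).esymm j

lemma E_zero (lam : Fin n → ℝ) (S : Finset (Fin n)) : E lam S 0 = 1 := my_esymm_zero _

lemma E_card (lam : Fin n → ℝ) (S : Finset (Fin n)) (j : ℕ) (h : S.card < j) :
    E lam S j = 0 := by
  apply my_esymm_eq_zero
  rwa [Multiset.card_map, ← Finset.card_def]

lemma E_rec (lam : Fin n → ℝ) (S : Finset (Fin n)) {i : Fin n} (hi : i ∈ S) (j : ℕ) :
    E lam S (j+1) = E lam (S.erase i) (j+1) + lam i * E lam (S.erase i) j := by
  have hv : S.val = i ::ₘ (S.erase i).val := by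
    rw [Finset.erase_val]
    exact (Multiset.cons_erase (by rwa [← Finset.mem_def])).symm
  rw [E, hv, Multiset.map_cons, my_esymm_cons]
  rfl

/-- Garding cone condition on a subset. -/
def GammaOn (lam : Fin n → ℝ) (S : Finset (Fin n)) (k : ℕ) : Prop :=
  ∀ j : ℕ, 1 ≤ j → j ≤ k → 0 < E lam S j

lemma gammaOn_mono {lam : Fin n → ℝ} {S : Finset (Fin n)} {k k' : ℕ} (h : k' ≤ k)
    (hG : GammaOn lam S k) : GammaOn lam S k' :=
  fun j h1 h2 => hG j h1 (h2.trans h)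

/-- Key lemma: removing one entry drops the Garding cone level by at most one. -/
lemma gammaOn_erase {lam : Fin n → ℝ} : ∀ (k : ℕ) (S : Finset (Fin n)) (i : Fin n),
    i ∈ S → GammaOn lam S k → GammaOn lam (S.erase i) (k-1) := by
  intro k
  induction k with
  | zero => intro S i hi hG j h1 h2; omega
  | succ k ih =>
      intro S i hi hG
      have hG' : GammaOn lam (S.erase i) (k-1) := ih S i hi (gammaOn_mono (Nat.le_succ k) hG)
      intro j h1 h2
      rcases Nat.lt_or_ge j k with hlt | hge
      · exact hG' j h1 (by omega)
      · -- j = k, and k ≥ 1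
        have hj : j = k := by omega
        subst hj
        obtain ⟨k', rfl⟩ : ∃ k', j = k' + 1 := ⟨j - 1, by omega⟩
        have ha : 0 < E lam (S.erase i) k' := by
          rcases Nat.eq_zero_or_pos k' with h0 | hpos
          · subst h0; rw [E_zero]; norm_num
          · exact hG' k' hpos (by omega)
        have hn : E lam (S.erase i) k' * E lam (S.erase i) (k'+2)
            ≤ (E lam (S.erase i) (k'+1))^2 := newton _ k'
        have h1' : 0 < E lam (S.erase i) (k'+1) + lam i * E lam (S.erase i) k' := by
          have := hG (k'+1) (by omega) (by omega)
          rwa [E_rec lam S hi k'] at this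
        have h2' : 0 < E lam (S.erase i) (k'+2) + lam i * E lam (S.erase i) (k'+1) := by
          have := hG (k'+2) (by omega) (by omega)
          rwa [E_rec lam S hi (k'+1)] at this
        show 0 < E lam (S.erase i) (k'+1)
        by_contra hb
        push_neg at hb
        nlinarith [mul_nonneg h1'.le (neg_nonneg.2 hb), mul_pos h2' ha, hn]

lemma lam_pos_of_min {lam : Fin n → ℝ} {S : Finset (Fin n)} {k : ℕ} (hk : 1 ≤ k)
    (hG : GammaOn lam S k) (hsort : Antitone lam) {i0 : Fin n}
    (hmin : ∀ j ∈ S, i0 ≤ j) : 0 < lam i0 := by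
  have h1 : 0 < E lam S 1 := hG 1 le_rfl hk
  have hsum : E lam S 1 = ∑ i ∈ S, lam i := by
    rw [E, my_esymm_one]
    rfl
  rw [hsum] at h1
  by_contra hneg
  push_neg at hneg
  have : ∀ i ∈ S, lam i ≤ 0 := by
    intro i hiS
    exact (hsort (hmin i hiS)).trans hneg
  linarith [Finset.sum_nonpos this]

/-- Main induction. -/
lemma main_ineq {lam : Fin n → ℝ} (hsort : Antitone lam) :
    ∀ (l k : ℕ) (S T : Finset (Fin n)), l < k → k ≤ S.card → T ⊆ S → T.card = l →
      (∀ i ∈ T, ∀ j ∈ S, j ∉ T → i ≤ j) → GammaOn lam S k →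
      ∏ i ∈ T, lam i ≤ E lam S l := by
  intro l
  induction l with
  | zero =>
      intro k S T _ _ _ hTcard _ _
      rw [Finset.card_eq_zero.mp hTcard, Finset.prod_empty, E_zero]
  | succ l ih =>
      intro k S T hlk hkS hTS hTcard hinit hG
      have hTne : T.Nonempty := Finset.card_pos.mp (by omega)
      set i0 := T.min' hTne with hi0
      have hi0T : i0 ∈ T := T.min'_mem hTne
      have hi0S : i0 ∈ S := hTS hi0T
      have hmin : ∀ j ∈ S, i0 ≤ j := by
        intro j hj
        by_cases hjT : j ∈ T
        · exact T.min'_le j hjT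
        · exact hinit i0 hi0T j hj hjT
      have hlam0 : 0 < lam i0 := lam_pos_of_min (by omega) hG hsort hmin
      have hGS' : GammaOn lam (S.erase i0) (k-1) := gammaOn_erase k S i0 hi0S hG
      have hIH : ∏ i ∈ T.erase i0, lam i ≤ E lam (S.erase i0) l := by
        apply ih (k-1) (S.erase i0) (T.erase i0) (by omega)
          (by rw [Finset.card_erase_of_mem hi0S]; omega)
          (Finset.erase_subset_erase i0 hTS)
          (by rw [Finset.card_erase_of_mem hi0T]; omega)
          _ hGS'
        intro i hiT' j hjS' hjT'
        have hiT : i ∈ T := Finset.mem_of_mem_erase hiT'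
        have hjS : j ∈ S := Finset.mem_of_mem_erase hjS'
        have hjne : j ≠ i0 := Finset.ne_of_mem_erase hjS'
        have hjT : j ∉ T := by
          intro hj
          exact hjT' (Finset.mem_erase.mpr ⟨hjne, hj⟩)
        exact hinit i hiT j hjS hjT
      have hE' : 0 < E lam (S.erase i0) (l+1) := hGS' (l+1) (by omega) (by omega)
      have hrec : E lam S (l+1)
          = E lam (S.erase i0) (l+1) + lam i0 * E lam (S.erase i0) l := E_rec lam S hi0S l
      have hprod : ∏ i ∈ T, lam i = lam i0 * ∏ i ∈ T.erase i0, lam i :=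
        (Finset.mul_prod_erase T lam hi0T).symm
      rw [hprod, hrec]
      have : lam i0 * ∏ i ∈ T.erase i0, lam i ≤ lam i0 * E lam (S.erase i0) l :=
        mul_le_mul_of_nonneg_left hIH hlam0.le
      linarith

lemma bridge (lam : Fin n → ℝ) (S : Finset (Fin n)) (j : ℕ) :
    esymmOn S (j : ℤ) lam = E lam S j := by
  rw [esymmOn, if_neg (by simp), Int.toNat_natCast, E]
  exact (Finset.esymm_map_val lam S j).symm

end SigmaAux

open SigmaAux in
theorem sigma_l_ge_prod {n : ℕ} (l k : ℕ) (hl : 1 ≤ l) (hlk : l < k) (hkn : k ≤ n)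
    (lam : Fin n → ℝ) (hG : GammaCone k lam) (hsort : Antitone lam) :
    esymm (l : ℤ) lam ≥ ∏ i ∈ Finset.univ.filter (fun i : Fin n => (i : ℕ) < l), lam i := by
  have hln : l ≤ n := by omega
  set T := Finset.univ.filter (fun i : Fin n => (i : ℕ) < l) with hT
  have hTmap : T = Finset.map (Fin.castLEEmb hln) Finset.univ := by
    ext i
    simp only [hT, Finset.mem_filter, Finset.mem_univ, true_and, Finset.mem_map]
    constructor
    · intro hi
      exact ⟨⟨(i : ℕ), hi⟩, by ext; simp [Fin.castLEEmb]⟩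
    · rintro ⟨j, rfl⟩
      simpa [Fin.castLEEmb] using j.isLt
  have hTcard : T.card = l := by
    rw [hTmap, Finset.card_map, Finset.card_univ, Fintype.card_fin]
  have hGamma : GammaOn lam Finset.univ k := by
    intro j h1 h2
    have := hG j h1 h2
    rwa [esymm, bridge] at this
  have hinit : ∀ i ∈ T, ∀ j ∈ (Finset.univ : Finset (Fin n)), j ∉ T → i ≤ j := by
    intro i hi j _ hj
    simp only [hT, Finset.mem_filter, Finset.mem_univ, true_and] at hi hj
    have : l ≤ (j : ℕ) := by omega
    exact Fin.le_def.mpr (by omega)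
  rw [ge_iff_le, esymm, bridge]
  exact main_ineq hsort l k Finset.univ T hlk
    (by rw [Finset.card_univ, Fintype.card_fin]; exact hkn)
    (Finset.subset_univ T) hTcard hinit hGamma
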